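/- Let F: Q_sym → ℝ be defined by F(ψ) = ∫_A ψ^c dμ + ∫_B ψ dν, where ν is a symmetric positive measure on B of total mass μ(A). If ψ ∈ Q_sym satisfies (∂^c ψ^c)_* μ = ν (i.e., the pushforward of μ under the a.e.-defined c-gradient map of ψ^c equals ν), then ψ is a global minimizer of F over Q_sym. -/

import Mathlib

open MeasureTheory

variable {V : Type*} [NormedAddCommGroup V] [InnerProductSpace ℝ V]

/-- c-transform with respect to the set `B`: `f^c(x) = sup_{n∈B}(⟨x,n⟩ − f(n))`. -/
noncomputable def ctB (B : Set V) (f : V → ℝ) : V → ℝ :=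
  fun x => ⨆ n : B, ((inner ℝ x (n : V) : ℝ) - f n)

/-- Double c-transform: `f^{cc}(y) = sup_{m∈A}(⟨m,y⟩ − f^c(m))`. -/
noncomputable def cctAB (A B : Set V) (f : V → ℝ) : V → ℝ :=
  fun y => ⨆ x : A, ((inner ℝ (x : V) y : ℝ) - ctB B f x)



lemma ctB_bddAbove {B : Set V} (hB : IsCompact B) {f : V → ℝ}
    (hf : ContinuousOn f B) (x : V) :
    BddAbove (Set.range fun n : B => ((inner ℝ x (n : V) : ℝ) - f n)) := by
  rw [show (fun n : B => ((inner ℝ x (n : V) : ℝ) - f n))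
      = B.domRestrict (fun n => ((inner ℝ x n : ℝ) - f n)) from rfl, Set.range_domRestrict]
  exact (hB.image_of_continuousOn
    (((continuous_const.inner continuous_id).continuousOn).sub hf)).bddAbove

lemma le_ctB {B : Set V} (hB : IsCompact B) {f : V → ℝ}
    (hf : ContinuousOn f B) {x n : V} (hn : n ∈ B) :
    (inner ℝ x n : ℝ) - f n ≤ ctB B f x :=
  le_ciSup (ctB_bddAbove hB hf x) ⟨n, hn⟩

lemma ctB_lipschitz {B : Set V} (hB : IsCompact B) (hBne : B.Nonempty)
    {f : V → ℝ} (hf : ContinuousOn f B) {R : ℝ} (hR : ∀ n ∈ B, ‖n‖ ≤ R) :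
    ∀ x y, ctB B f x ≤ ctB B f y + R * ‖x - y‖ := by
  intro x y
  have : Nonempty B := hBne.to_subtype
  refine ciSup_le fun n => ?_
  have h1 : (inner ℝ x (n : V) : ℝ) - f n
      = ((inner ℝ y (n : V) : ℝ) - f n) + (inner ℝ (x - y) (n : V) : ℝ) := by
    rw [inner_sub_left]; ring
  have h2 : (inner ℝ (x - y) (n : V) : ℝ) ≤ R * ‖x - y‖ := by
    calc (inner ℝ (x - y) (n : V) : ℝ) ≤ ‖x - y‖ * ‖(n : V)‖ := real_inner_le_norm _ _
    _ ≤ ‖x - y‖ * R := by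
        exact mul_le_mul_of_nonneg_left (hR n n.2) (norm_nonneg _)
    _ = R * ‖x - y‖ := mul_comm _ _
  rw [h1]
  exact add_le_add (le_ctB hB hf n.2) h2

lemma ctB_continuous {B : Set V} (hB : IsCompact B) (hBne : B.Nonempty)
    {f : V → ℝ} (hf : ContinuousOn f B) : Continuous (ctB B f) := by
  obtain ⟨R, hR0, hR⟩ : ∃ R, 0 ≤ R ∧ ∀ n ∈ B, ‖n‖ ≤ R := by
    obtain ⟨R, hR⟩ := hB.isBounded.exists_norm_le
    exact ⟨max R 0, le_max_right _ _, fun n hn => (hR n hn).trans (le_max_left _ _)⟩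
  have key := ctB_lipschitz hB hBne hf hR
  have : LipschitzWith R.toNNReal (ctB B f) := by
    apply LipschitzWith.of_dist_le_mul
    intro x y
    rw [Real.dist_eq, Real.coe_toNNReal _ hR0, dist_eq_norm]
    rw [abs_sub_le_iff]
    constructor
    · linarith [key x y]
    · have := key y x
      rw [norm_sub_rev] at this
      linarith
  exact this.continuous

/-- If `ψ ∈ Q_sym` and the pushforward of `μ` under the a.e.-defined c-gradient map
`g = ∂^c ψ^c` equals the symmetric measure `ν` of mass `μ(A)`, then `ψ` is a global
minimizer of `F(ψ') = ∫_A ψ'^c dμ + ∫_B ψ' dν` over `Q_sym`. -/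
theorem cGradient_pushforward_implies_minimizer
    {W : Type*} [NormedAddCommGroup W] [InnerProductSpace ℝ W] [FiniteDimensional ℝ W]
    [MeasurableSpace W] [BorelSpace W]
    (G : Type*) [Group G] [MulAction G W]
    (A B : Set W) (hAcpt : IsCompact A) (hBcpt : IsCompact B)
    (hAne : A.Nonempty) (hBne : B.Nonempty)
    (μ ν : Measure W) [IsFiniteMeasure μ] [IsFiniteMeasure ν]
    (hμA : μ Aᶜ = 0) (hνB : ν Bᶜ = 0) (hmass : ν Set.univ = μ Set.univ)
    (hνsym : ∀ σ : G, Measure.map (fun x => σ • x) ν = ν)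
    (Qsym : Set (W → ℝ))
    (hQsym : Qsym = {f | ContinuousOn f B ∧ (∀ n ∈ B, cctAB A B f n = f n) ∧
      ∀ σ : G, ∀ x, f (σ • x) = f x})
    (F : (W → ℝ) → ℝ)
    (hF : F = fun f => (∫ m, ctB B f m ∂μ) + ∫ n, f n ∂ν)
    (ψ : W → ℝ) (hψ : ψ ∈ Qsym)
    (g : W → W) (hgmeas : Measurable g)
    (hg : ∀ᵐ m ∂μ, g m ∈ B ∧ ctB B ψ m + ψ (g m) = (inner ℝ m (g m) : ℝ))
    (hpush : Measure.map g μ = ν) :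
    ∀ ψ' ∈ Qsym, F ψ ≤ F ψ' := by
  intro ψ' hψ'
  rw [hQsym] at hψ hψ'
  obtain ⟨hψc, -, -⟩ := hψ
  obtain ⟨hψ'c, -, -⟩ := hψ'
  have hAmem : ∀ᵐ m ∂μ, m ∈ A := by rw [MeasureTheory.ae_iff]; exact hμA
  have hBmem : ∀ᵐ n ∂ν, n ∈ B := by rw [MeasureTheory.ae_iff]; exact hνB
  have hμrestr : μ.restrict A = μ := Measure.restrict_eq_self_of_ae_mem hAmem
  have hνrestr : ν.restrict B = ν := Measure.restrict_eq_self_of_ae_mem hBmem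
  have hctψ : Integrable (ctB B ψ) μ := by
    rw [← hμrestr]
    exact ((ctB_continuous hBcpt hBne hψc).continuousOn).integrableOn_compact hAcpt
  have hctψ' : Integrable (ctB B ψ') μ := by
    rw [← hμrestr]
    exact ((ctB_continuous hBcpt hBne hψ'c).continuousOn).integrableOn_compact hAcpt
  have hψint : Integrable ψ ν := by
    rw [← hνrestr]; exact hψc.integrableOn_compact hBcpt
  have hψ'int : Integrable ψ' ν := by
    rw [← hνrestr]; exact hψ'c.integrableOn_compact hBcpt
  have hψmap : AEStronglyMeasurable ψ (Measure.map g μ) := by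
    rw [hpush]; exact hψint.aestronglyMeasurable
  have hψ'map : AEStronglyMeasurable ψ' (Measure.map g μ) := by
    rw [hpush]; exact hψ'int.aestronglyMeasurable
  have hψg : Integrable (fun m => ψ (g m)) μ := by
    have := (integrable_map_measure hψmap hgmeas.aemeasurable).mp (by rw [hpush]; exact hψint)
    exact this
  have hψ'g : Integrable (fun m => ψ' (g m)) μ := by
    have := (integrable_map_measure hψ'map hgmeas.aemeasurable).mp (by rw [hpush]; exact hψ'int)
    exact this
  have hmapψ : ∫ n, ψ n ∂ν = ∫ m, ψ (g m) ∂μ := by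
    rw [← hpush, integral_map hgmeas.aemeasurable hψmap]
  have hmapψ' : ∫ n, ψ' n ∂ν = ∫ m, ψ' (g m) ∂μ := by
    rw [← hpush, integral_map hgmeas.aemeasurable hψ'map]
  have hinner_int : Integrable (fun m => (inner ℝ m (g m) : ℝ)) μ :=
    (hctψ.add hψg).congr (hg.mono fun m hm => hm.2)
  have hle : ∀ᵐ m ∂μ, (inner ℝ m (g m) : ℝ) ≤ ctB B ψ' m + ψ' (g m) := by
    refine hg.mono fun m hm => ?_
    have := le_ctB hBcpt hψ'c (x := m) hm.1
    linarith
  rw [hF]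
  simp only
  rw [hmapψ, hmapψ', ← integral_add hctψ hψg, ← integral_add hctψ' hψ'g]
  calc ∫ m, (ctB B ψ m + ψ (g m)) ∂μ = ∫ m, (inner ℝ m (g m) : ℝ) ∂μ :=
        integral_congr_ae (hg.mono fun m hm => hm.2)
    _ ≤ ∫ m, (ctB B ψ' m + ψ' (g m)) ∂μ :=
        integral_mono_ae hinner_int (hctψ'.add hψ'g) hle
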